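/- The space ℝ^N endowed with any norm |·| has the approximate hyperplane property with 1-norming set the whole dual unit sphere S_{(ℝ^N)*}; moreover, the maps Υ_ε : S_{(ℝ^N)*} → S_{(ℝ^N)*} witnessing this property can be chosen so that whenever a* ∈ S_{(ℝ^N)*} satisfies a*(e_i) = 0 for some i ≤ N, then also (Υ_ε(a*))(e_i) = 0, where e_i are the canonical basis vectors of ℝ^N. -/

import Mathlib

/-- `f` is a norm on `ℝ^N`. -/
def IsNormOn {N : ℕ} (f : (Fin N → ℝ) → ℝ) : Prop :=
  (∀ x, f x = 0 ↔ x = 0) ∧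
  (∀ (a : ℝ) (x), f (a • x) = |a| * f x) ∧
  (∀ x y, f (x + y) ≤ f x + f y)

/-- `f` is absolute: it only depends on the absolute values of the coordinates. -/
def IsAbsoluteNorm {N : ℕ} (f : (Fin N → ℝ) → ℝ) : Prop :=
  ∀ x, f x = f (fun i => |x i|)

/-- `f` is normalized: it takes the value `1` at each canonical basis vector. -/
def IsNormalizedNorm {N : ℕ} (f : (Fin N → ℝ) → ℝ) : Prop :=
  ∀ i, f (Pi.single i 1) = 1


/-- The dual norm, with respect to the norm `f` on `ℝ^N`, of a linear functional `φ`: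
the supremum of `|φ x|` over the `f`-unit ball. -/
noncomputable def dualNormF {N : ℕ} (f : (Fin N → ℝ) → ℝ)
    (φ : (Fin N → ℝ) →ₗ[ℝ] ℝ) : ℝ :=
  sSup {s : ℝ | ∃ x, f x ≤ 1 ∧ s = |φ x|}

section Basic
variable {N : ℕ} {f : (Fin N → ℝ) → ℝ} (hn : IsNormOn f)
include hn

theorem f_zero : f 0 = 0 := (hn.1 0).mpr rfl

theorem f_neg (x) : f (-x) = f x := by
  have := hn.2.1 (-1) x
  simpa using this

theorem f_nonneg (x) : 0 ≤ f x := by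
  have h := hn.2.2 x (-x)
  rw [add_neg_cancel, f_zero hn, f_neg hn] at h
  linarith

theorem f_pos {x} (hx : x ≠ 0) : 0 < f x :=
  lt_of_le_of_ne (f_nonneg hn x) (fun h => hx ((hn.1 x).mp h.symm))

theorem f_sub_le (x y z) : f (x - z) ≤ f (x - y) + f (y - z) := by
  have := hn.2.2 (x - y) (y - z)
  simpa using this

theorem abs_f_sub_le (x y) : |f x - f y| ≤ f (x - y) := by
  rw [abs_sub_le_iff]
  constructor
  · have := hn.2.2 (x - y) y; simpa using this
  · have := hn.2.2 (y - x) x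
    rw [sub_add_cancel] at this
    have h2 : f (y - x) = f (x - y) := by rw [← neg_sub, f_neg hn]
    linarith

theorem f_sum_le {s : Finset (Fin N)} {g : Fin N → (Fin N → ℝ)} :
    f (∑ i ∈ s, g i) ≤ ∑ i ∈ s, f (g i) := by
  classical
  induction s using Finset.cons_induction with
  | empty => simp [f_zero hn]
  | cons a s ha ih =>
    rw [Finset.sum_cons, Finset.sum_cons]
    exact le_trans (hn.2.2 _ _) (by linarith)

/-- upper bound constant -/
theorem f_le_C (x) : f x ≤ (∑ i, f (Pi.single i 1)) * ‖x‖ := by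
  classical
  have hx : x = ∑ i, x i • (Pi.single i 1 : Fin N → ℝ) := by
    conv_lhs => rw [pi_eq_sum_univ x]
    refine Finset.sum_congr rfl fun i _ => ?_
    congr 1
    funext j
    simp [Pi.single_apply, eq_comm]
  calc f x ≤ ∑ i, f (x i • (Pi.single i 1 : Fin N → ℝ)) := by
        conv_lhs => rw [hx]
        exact f_sum_le hn
    _ ≤ ∑ i, f (Pi.single i 1) * ‖x‖ := by
        refine Finset.sum_le_sum fun i _ => ?_
        rw [hn.2.1, mul_comm]
        refine mul_le_mul_of_nonneg_left ?_ (f_nonneg hn _)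
        simpa [Real.norm_eq_abs] using norm_le_pi_norm x i
    _ = (∑ i, f (Pi.single i 1)) * ‖x‖ := by rw [Finset.sum_mul]

end Basic

section Topo
variable {N : ℕ} {f : (Fin N → ℝ) → ℝ} (hn : IsNormOn f)
include hn

theorem f_cont : Continuous f := by
  set C := (∑ i, f (Pi.single i (1:ℝ)))
  have key : ∀ x y : Fin N → ℝ, dist (f x) (f y) ≤ C * dist x y := by
    intro x y
    rw [Real.dist_eq, dist_eq_norm]
    exact le_trans (abs_f_sub_le hn x y) (f_le_C hn (x - y))
  have hC : 0 ≤ C := Finset.sum_nonneg fun i _ => f_nonneg hn _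
  have : LipschitzWith ⟨C, hC⟩ f := LipschitzWith.of_dist_le_mul (by exact_mod_cast key)
  exact this.continuous

theorem f_lower : ∃ c : ℝ, 0 < c ∧ ∀ x, c * ‖x‖ ≤ f x := by
  rcases Nat.eq_zero_or_pos N with hN | hN
  · refine ⟨1, one_pos, fun x => ?_⟩
    have : x = 0 := by subst hN; exact funext fun i => absurd i.2 (by omega)
    simp [this, f_zero hn]
  · haveI : Nonempty (Fin N) := Fin.pos_iff_nonempty.mp hN
    have hsph : IsCompact (Metric.sphere (0 : Fin N → ℝ) 1) := isCompact_sphere 0 1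
    have hne : (Metric.sphere (0 : Fin N → ℝ) 1).Nonempty :=
      NormedSpace.sphere_nonempty.mpr zero_le_one
    obtain ⟨x₀, hx₀, hmin⟩ := hsph.exists_isMinOn hne ((f_cont hn).continuousOn)
    have hx₀n : ‖x₀‖ = 1 := by simpa using hx₀
    have hx₀ne : x₀ ≠ 0 := by intro h; rw [h] at hx₀n; simp at hx₀n
    refine ⟨f x₀, f_pos hn hx₀ne, fun x => ?_⟩
    rcases eq_or_ne x 0 with rfl | hx
    · simp [f_zero hn]
    · have hxn : ‖x‖ ≠ 0 := norm_ne_zero_iff.mpr hx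
      have h1 : (‖x‖⁻¹ • x) ∈ Metric.sphere (0 : Fin N → ℝ) 1 := by
        simp [norm_smul, abs_of_nonneg (inv_nonneg.mpr (norm_nonneg x)), inv_mul_cancel₀ hxn]
      have h2 : f x₀ ≤ f (‖x‖⁻¹ • x) := hmin h1
      have h3 : f (‖x‖⁻¹ • x) = ‖x‖⁻¹ * f x := by
        rw [hn.2.1, abs_of_nonneg (inv_nonneg.mpr (norm_nonneg x))]
      rw [h3] at h2
      have hxp : 0 < ‖x‖ := norm_pos_iff.mpr hx
      calc f x₀ * ‖x‖ ≤ (‖x‖⁻¹ * f x) * ‖x‖ := by nlinarith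
        _ = f x := by field_simp

theorem f_ball_convex : Convex ℝ {x : Fin N → ℝ | f x < 1} := by
  intro x hx y hy s t hs ht hst
  simp only [Set.mem_setOf_eq] at *
  calc f (s • x + t • y) ≤ f (s • x) + f (t • y) := hn.2.2 _ _
    _ = s * f x + t * f y := by rw [hn.2.1, hn.2.1, abs_of_nonneg hs, abs_of_nonneg ht]
    _ < s * 1 + t * 1 := by
        rcases eq_or_lt_of_le hs with rfl|hs' 
        · rcases eq_or_lt_of_le ht with rfl|ht'
          · simp at hst
          · nlinarith
        · rcases eq_or_lt_of_le ht with rfl|ht'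
          · nlinarith
          · nlinarith
    _ = 1 := by linarith

theorem f_ball_compact : IsCompact {x : Fin N → ℝ | f x ≤ 1} := by
  obtain ⟨c, hc, hcb⟩ := f_lower hn
  have hb : Bornology.IsBounded {x : Fin N → ℝ | f x ≤ 1} := by
    refine (Metric.isBounded_iff_subset_closedBall 0).mpr ⟨c⁻¹, fun x hx => ?_⟩
    simp only [Set.mem_setOf_eq] at hx
    simp only [Metric.mem_closedBall, dist_zero_right]
    have h1 : c * ‖x‖ ≤ 1 := le_trans (hcb x) hx
    have h2 : (0:ℝ) < c⁻¹ := inv_pos.mpr hc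
    nlinarith [mul_inv_cancel₀ (ne_of_gt hc)]
  have hcl : IsClosed {x : Fin N → ℝ | f x ≤ 1} := isClosed_le (f_cont hn) continuous_const
  exact Metric.isCompact_of_isClosed_isBounded hcl hb

theorem f_sphere_compact : IsCompact {x : Fin N → ℝ | f x = 1} := by
  refine (f_ball_compact hn).of_isClosed_subset (isClosed_eq (f_cont hn) continuous_const) ?_
  intro x hx; exact le_of_eq hx

end Topo

section Dual
variable {N : ℕ} {f : (Fin N → ℝ) → ℝ} (hn : IsNormOn f)

include hn

theorem dset_nonempty (φ : (Fin N → ℝ) →ₗ[ℝ] ℝ) :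
    {s : ℝ | ∃ x, f x ≤ 1 ∧ s = |φ x|}.Nonempty :=
  ⟨|φ 0|, 0, by rw [f_zero hn]; exact zero_le_one, rfl⟩

theorem dset_bdd (φ : (Fin N → ℝ) →ₗ[ℝ] ℝ) :
    BddAbove {s : ℝ | ∃ x, f x ≤ 1 ∧ s = |φ x|} := by
  obtain ⟨c, hc, hcb⟩ := f_lower hn
  set φc := LinearMap.toContinuousLinearMap φ with hφc
  refine ⟨‖φc‖ * c⁻¹, fun s hs => ?_⟩
  obtain ⟨x, hx, rfl⟩ := hs
  have h1 : ‖φc x‖ ≤ ‖φc‖ * ‖x‖ := φc.le_opNorm x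
  have h2 : ‖x‖ ≤ c⁻¹ := by
    have := le_trans (hcb x) hx
    have h2 : (0:ℝ) < c⁻¹ := inv_pos.mpr hc
    nlinarith [mul_inv_cancel₀ (ne_of_gt hc)]
  have h3 : φc x = φ x := rfl
  rw [Real.norm_eq_abs, h3] at h1
  nlinarith [norm_nonneg φc, abs_nonneg (φ x), norm_nonneg x]

theorem dual_nonneg (φ : (Fin N → ℝ) →ₗ[ℝ] ℝ) : 0 ≤ dualNormF f φ := by
  have h0 : |φ (0 : Fin N → ℝ)| ∈ {s : ℝ | ∃ x, f x ≤ 1 ∧ s = |φ x|} :=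
    ⟨0, by rw [f_zero hn]; exact zero_le_one, rfl⟩
  have := le_csSup (dset_bdd hn φ) h0
  simp at this; exact this

theorem dual_ub (φ : (Fin N → ℝ) →ₗ[ℝ] ℝ) {x} (hx : f x ≤ 1) : |φ x| ≤ dualNormF f φ :=
  le_csSup (dset_bdd hn φ) ⟨x, hx, rfl⟩

theorem dual_mul (φ : (Fin N → ℝ) →ₗ[ℝ] ℝ) (x) : |φ x| ≤ dualNormF f φ * f x := by
  rcases eq_or_ne x 0 with rfl | hx
  · simp [f_zero hn]
  · have hfx : 0 < f x := f_pos hn hx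
    have h1 : f ((f x)⁻¹ • x) ≤ 1 := by
      rw [hn.2.1, abs_of_nonneg (inv_nonneg.mpr hfx.le), inv_mul_cancel₀ hfx.ne']
    have h2 := dual_ub hn φ h1
    rw [map_smul, smul_eq_mul, abs_mul, abs_of_nonneg (inv_nonneg.mpr hfx.le)] at h2
    calc |φ x| = f x * ((f x)⁻¹ * |φ x|) := by field_simp
      _ ≤ f x * dualNormF f φ := by nlinarith
      _ = dualNormF f φ * f x := mul_comm _ _

theorem dual_attained (φ : (Fin N → ℝ) →ₗ[ℝ] ℝ) :
    ∃ x, f x ≤ 1 ∧ |φ x| = dualNormF f φ := by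
  have hcont : Continuous fun x : Fin N → ℝ => |φ x| :=
    (LinearMap.continuous_of_finiteDimensional φ).abs
  obtain ⟨x₀, hx₀, hmax⟩ := (f_ball_compact hn).exists_isMaxOn
    ⟨0, by simp [f_zero hn]⟩ hcont.continuousOn
  refine ⟨x₀, hx₀, le_antisymm (le_csSup (dset_bdd hn φ) ⟨x₀, hx₀, rfl⟩) ?_⟩
  refine csSup_le (dset_nonempty hn φ) ?_
  rintro s ⟨x, hx, rfl⟩
  exact hmax hx

theorem dual_add_le (φ ψ : (Fin N → ℝ) →ₗ[ℝ] ℝ) :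
    dualNormF f (φ + ψ) ≤ dualNormF f φ + dualNormF f ψ := by
  refine csSup_le (dset_nonempty hn _) ?_
  rintro s ⟨x, hx, rfl⟩
  have := abs_add_le (φ x) (ψ x)
  simp only [LinearMap.add_apply]
  exact le_trans this (add_le_add (dual_ub hn φ hx) (dual_ub hn ψ hx))

omit hn in
theorem dual_neg (φ : (Fin N → ℝ) →ₗ[ℝ] ℝ) : dualNormF f (-φ) = dualNormF f φ := by
  unfold dualNormF
  congr 1
  ext s
  simp [abs_neg]

theorem face_exists {a : (Fin N → ℝ) →ₗ[ℝ] ℝ} (ha : dualNormF f a = 1) :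
    ∃ x, f x = 1 ∧ a x = 1 := by
  obtain ⟨x, hx, hax⟩ := dual_attained hn a
  rw [ha] at hax
  have hfx : f x = 1 := by
    have := dual_mul hn a x
    rw [ha, one_mul, hax] at this
    linarith
  rcases abs_cases (a x) with ⟨h1, _⟩ | ⟨h1, _⟩
  · exact ⟨x, hfx, by rw [← h1, hax]⟩
  · refine ⟨-x, by rw [f_neg hn, hfx], ?_⟩
    rw [map_neg]
    rw [hax] at h1
    linarith

end Dual

section DvSec
variable {N : ℕ}

noncomputable def Dv (v : Fin N → ℝ) : (Fin N → ℝ) →ₗ[ℝ] ℝ :=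
  ∑ i, v i • LinearMap.proj i

theorem Dv_apply (v x : Fin N → ℝ) : Dv v x = ∑ i, v i * x i := by
  simp [Dv]

theorem Dv_single (v : Fin N → ℝ) (i : Fin N) : Dv v (Pi.single i 1) = v i := by
  rw [Dv_apply]
  rw [Finset.sum_eq_single i]
  · simp
  · intro j _ hj; simp [Pi.single_apply, hj]
  · simp

theorem Dv_eq (a : (Fin N → ℝ) →ₗ[ℝ] ℝ) : Dv (fun i => a (Pi.single i 1)) = a := by
  apply LinearMap.ext; intro x
  rw [Dv_apply, LinearMap.pi_apply_eq_sum_univ a x]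
  refine Finset.sum_congr rfl fun i _ => ?_
  rw [smul_eq_mul, mul_comm]
  congr 2
  funext j
  simp [Pi.single_apply, eq_comm]

theorem Dv_sub (u v : Fin N → ℝ) : Dv (u - v) = Dv u - Dv v := by
  ext x
  simp [Dv_apply, Finset.sum_sub_distrib, sub_mul]

theorem Dv_tendsto {v : ℕ → Fin N → ℝ} {x : ℕ → Fin N → ℝ} {v₀ x₀ : Fin N → ℝ}
    (hv : Filter.Tendsto v Filter.atTop (nhds v₀)) (hx : Filter.Tendsto x Filter.atTop (nhds x₀)) :
    Filter.Tendsto (fun n => Dv (v n) (x n)) Filter.atTop (nhds (Dv v₀ x₀)) := by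
  simp only [Dv_apply]
  refine tendsto_finset_sum _ fun i _ => Filter.Tendsto.mul ?_ ?_
  · exact (continuous_apply i).continuousAt.tendsto.comp hv
  · exact (continuous_apply i).continuousAt.tendsto.comp hx

end DvSec

section GSec
variable {N : ℕ} {f : (Fin N → ℝ) → ℝ} (hn : IsNormOn f)
include hn

theorem gDv_le : ∃ C : ℝ, 0 < C ∧ ∀ v : Fin N → ℝ, dualNormF f (Dv v) ≤ C * ‖v‖ := by
  obtain ⟨c, hc, hcb⟩ := f_lower hn
  refine ⟨(N + 1) * c⁻¹, by positivity, fun v => ?_⟩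
  refine csSup_le (dset_nonempty hn _) ?_
  rintro s ⟨x, hx, rfl⟩
  have hxn : ‖x‖ ≤ c⁻¹ := by
    have := le_trans (hcb x) hx
    have h2 : (0:ℝ) < c⁻¹ := inv_pos.mpr hc
    nlinarith [mul_inv_cancel₀ (ne_of_gt hc)]
  rw [Dv_apply]
  calc |∑ i, v i * x i| ≤ ∑ i, |v i * x i| := Finset.abs_sum_le_sum_abs _ _
    _ ≤ ∑ _i : Fin N, ‖v‖ * c⁻¹ := by
        refine Finset.sum_le_sum fun i _ => ?_
        rw [abs_mul]
        have h1 : |v i| ≤ ‖v‖ := by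
          simpa [Real.norm_eq_abs] using norm_le_pi_norm v i
        have h2 : |x i| ≤ c⁻¹ := by
          refine le_trans ?_ hxn
          simpa [Real.norm_eq_abs] using norm_le_pi_norm x i
        have := abs_nonneg (v i); have := abs_nonneg (x i); have := norm_nonneg v
        nlinarith
    _ = N * (‖v‖ * c⁻¹) := by simp [Finset.sum_const]
    _ ≤ (N + 1) * c⁻¹ * ‖v‖ := by
        have := norm_nonneg v; have h2 : (0:ℝ) < c⁻¹ := inv_pos.mpr hc
        nlinarith

theorem g_cont : Continuous fun v : Fin N → ℝ => dualNormF f (Dv v) := by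
  obtain ⟨C, hC, hCb⟩ := gDv_le hn
  have key : ∀ u v : Fin N → ℝ,
      dist (dualNormF f (Dv u)) (dualNormF f (Dv v)) ≤ C * dist u v := by
    intro u v
    rw [Real.dist_eq, dist_eq_norm]
    have h1 : dualNormF f (Dv u) - dualNormF f (Dv v) ≤ dualNormF f (Dv (u - v)) := by
      have := dual_add_le hn (Dv v) (Dv (u - v))
      have he : Dv v + Dv (u - v) = Dv u := by rw [Dv_sub]; abel
      rw [he] at this
      linarith
    have h2 : dualNormF f (Dv v) - dualNormF f (Dv u) ≤ dualNormF f (Dv (u - v)) := by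
      have := dual_add_le hn (Dv u) (Dv (v - u))
      have he : Dv u + Dv (v - u) = Dv v := by rw [Dv_sub]; abel
      rw [he] at this
      have hneg : Dv (v - u) = -(Dv (u - v)) := by rw [Dv_sub, Dv_sub]; abel
      rw [hneg, dual_neg] at this
      linarith
    have h3 := hCb (u - v)
    rw [abs_le]
    constructor <;> nlinarith [abs_nonneg (dualNormF f (Dv u) - dualNormF f (Dv v))]
  have : LipschitzWith ⟨C, hC.le⟩ (fun v => dualNormF f (Dv v)) :=
    LipschitzWith.of_dist_le_mul (by exact_mod_cast key)
  exact this.continuous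

end GSec

section HB
variable {N : ℕ} {f : (Fin N → ℝ) → ℝ} (hn : IsNormOn f)
include hn

theorem hb {x : Fin N → ℝ} (hx : x ≠ 0) :
    ∃ a : (Fin N → ℝ) →ₗ[ℝ] ℝ, dualNormF f a = 1 ∧ a x = f x := by
  have hfx : 0 < f x := f_pos hn hx
  set x' := (f x)⁻¹ • x with hx'def
  have hfx' : f x' = 1 := by
    rw [hn.2.1, abs_of_nonneg (inv_nonneg.mpr hfx.le), inv_mul_cancel₀ hfx.ne']
  have hnot : x' ∉ {y : Fin N → ℝ | f y < 1} := by simp [hfx']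
  obtain ⟨φ, hφ⟩ := geometric_hahn_banach_open_point (f_ball_convex hn)
    (isOpen_lt (f_cont hn) continuous_const) hnot
  have h0 : (0 : Fin N → ℝ) ∈ {y : Fin N → ℝ | f y < 1} := by
    simp [f_zero hn]
  have hpos : 0 < φ x' := by have := hφ 0 h0; simpa using this
  have key : ∀ y, f y ≤ 1 → φ y ≤ φ x' := by
    intro y hy
    by_contra h
    push_neg at h
    have hφy : 0 < φ y := lt_trans hpos h
    set t := (φ x' / φ y + 1) / 2 with ht_def
    have hdp : 0 < φ x' / φ y := div_pos hpos hφy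
    have hd1 : φ x' / φ y < 1 := (div_lt_one hφy).mpr h
    have ht0 : 0 < t := by rw [ht_def]; linarith
    have ht1 : t < 1 := by rw [ht_def]; linarith
    have hty : f (t • y) < 1 := by
      rw [hn.2.1, abs_of_pos ht0]; nlinarith [f_nonneg hn y]
    have h2 := hφ _ hty
    rw [map_smul, smul_eq_mul] at h2
    have h3 : φ x' / φ y * φ y = φ x' := div_mul_cancel₀ _ hφy.ne'
    have h4 : t * φ y = (φ x' / φ y * φ y + φ y) / 2 := by rw [ht_def]; ring
    rw [h3] at h4
    linarith
  have keyabs : ∀ y, f y ≤ 1 → |φ y| ≤ φ x' := by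
    intro y hy
    have h1 := key y hy
    have h2 := key (-y) (by rw [f_neg hn]; exact hy)
    rw [map_neg] at h2
    exact abs_le.mpr ⟨by linarith, h1⟩
  set a : (Fin N → ℝ) →ₗ[ℝ] ℝ := (φ x')⁻¹ • (φ : (Fin N → ℝ) →ₗ[ℝ] ℝ) with ha_def
  have ha_apply : ∀ y, a y = (φ x')⁻¹ * φ y := fun y => rfl
  have hax' : a x' = 1 := by rw [ha_apply, inv_mul_cancel₀ hpos.ne']
  have hub : ∀ s ∈ {s : ℝ | ∃ y, f y ≤ 1 ∧ s = |a y|}, s ≤ 1 := by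
    rintro s ⟨y, hy, rfl⟩
    rw [ha_apply, abs_mul, abs_of_nonneg (inv_nonneg.mpr hpos.le)]
    have := keyabs y hy
    rw [inv_mul_le_iff₀ hpos]
    nlinarith
  have hd : dualNormF f a = 1 := by
    refine le_antisymm (csSup_le (dset_nonempty hn a) hub) ?_
    have hmem : (1:ℝ) ∈ {s : ℝ | ∃ y, f y ≤ 1 ∧ s = |a y|} :=
      ⟨x', hfx'.le, by rw [hax']; norm_num⟩
    exact le_csSup (dset_bdd hn a) hmem
  refine ⟨a, hd, ?_⟩
  have hxx : x = (f x) • x' := by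
    rw [hx'def, smul_smul, mul_inv_cancel₀ hfx.ne', one_smul]
  calc a x = a ((f x) • x') := by rw [← hxx]
    _ = f x * a x' := by rw [map_smul, smul_eq_mul]
    _ = f x := by rw [hax', mul_one]

theorem norming (x : Fin N → ℝ) :
    f x = sSup {s : ℝ | ∃ a : (Fin N → ℝ) →ₗ[ℝ] ℝ, dualNormF f a = 1 ∧ s = |a x|} := by
  rcases Nat.eq_zero_or_pos N with hN | hN
  · have hsub : ∀ y : Fin N → ℝ, y = 0 := by
      subst hN; exact fun y => funext fun i => absurd i.2 (by omega)
    have hempty : {s : ℝ | ∃ a : (Fin N → ℝ) →ₗ[ℝ] ℝ, dualNormF f a = 1 ∧ s = |a x|} = ∅ := by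
      refine Set.eq_empty_iff_forall_notMem.mpr ?_
      rintro s ⟨a, ha, rfl⟩
      have hset : {s : ℝ | ∃ y, f y ≤ 1 ∧ s = |a y|} = {0} := by
        ext s
        simp only [Set.mem_setOf_eq, Set.mem_singleton_iff]
        constructor
        · rintro ⟨y, hy, rfl⟩
          rw [hsub y, map_zero, abs_zero]
        · rintro rfl
          exact ⟨0, by rw [f_zero hn]; exact zero_le_one, by rw [map_zero, abs_zero]⟩
      rw [dualNormF, hset, csSup_singleton] at ha
      exact one_ne_zero ha.symm
    rw [hempty, Real.sSup_empty, hsub x, f_zero hn]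
  · have hub : ∀ s ∈ {s : ℝ | ∃ a : (Fin N → ℝ) →ₗ[ℝ] ℝ, dualNormF f a = 1 ∧ s = |a x|},
        s ≤ f x := by
      rintro s ⟨a, ha, rfl⟩
      have := dual_mul hn a x
      rw [ha, one_mul] at this
      exact this
    haveI : Nonempty (Fin N) := Fin.pos_iff_nonempty.mp hN
    obtain i0 := Classical.arbitrary (Fin N)
    have hs0 : (Pi.single i0 (1:ℝ) : Fin N → ℝ) ≠ 0 := by
      intro h
      have := congrFun h i0
      simp at this
    obtain ⟨a0, ha0, _⟩ := hb hn hs0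
    rcases eq_or_ne x 0 with rfl | hx
    · refine le_antisymm ?_ (csSup_le ⟨|a0 0|, a0, ha0, rfl⟩ hub)
      rw [f_zero hn]
      have : |a0 (0 : Fin N → ℝ)| = 0 := by rw [map_zero, abs_zero]
      calc (0:ℝ) = |a0 (0 : Fin N → ℝ)| := this.symm
        _ ≤ _ := le_csSup ⟨f 0, hub⟩ ⟨a0, ha0, rfl⟩
    · obtain ⟨a, ha, hax⟩ := hb hn hx
      refine le_antisymm ?_ (csSup_le ⟨|a x|, a, ha, rfl⟩ hub)
      have : f x = |a x| := by rw [hax, abs_of_nonneg (f_nonneg hn x)]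
      rw [this]
      exact le_csSup ⟨f x, hub⟩ ⟨a, ha, rfl⟩

end HB

section Claim
variable {N : ℕ} {f : (Fin N → ℝ) → ℝ} (hn : IsNormOn f)
include hn

theorem KT_compact (T : Finset (Fin N)) :
    IsCompact {v : Fin N → ℝ | dualNormF f (Dv v) = 1 ∧ ∀ i ∈ T, v i = 0} := by
  have hcl : IsClosed {v : Fin N → ℝ | dualNormF f (Dv v) = 1 ∧ ∀ i ∈ T, v i = 0} := by
    refine IsClosed.inter (isClosed_eq (g_cont hn) continuous_const) ?_
    show IsClosed {v : Fin N → ℝ | ∀ i ∈ T, v i = 0}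
    have : {v : Fin N → ℝ | ∀ i ∈ T, v i = 0} = ⋂ i ∈ T, {v : Fin N → ℝ | v i = 0} := by
      ext v; simp
    rw [this]
    exact isClosed_biInter fun i _ => isClosed_eq (continuous_apply i) continuous_const
  have hbdd : Bornology.IsBounded
      {v : Fin N → ℝ | dualNormF f (Dv v) = 1 ∧ ∀ i ∈ T, v i = 0} := by
    have hC : 0 ≤ ∑ i, f (Pi.single i (1:ℝ)) := Finset.sum_nonneg fun i _ => f_nonneg hn _
    refine (Metric.isBounded_iff_subset_closedBall 0).mpr
      ⟨∑ i, f (Pi.single i (1:ℝ)), fun v hv => ?_⟩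
    obtain ⟨hv1, _⟩ := hv
    simp only [Metric.mem_closedBall, dist_zero_right]
    refine (pi_norm_le_iff_of_nonneg hC).mpr fun i => ?_
    have h1 : |Dv v (Pi.single i 1)| ≤ dualNormF f (Dv v) * f (Pi.single i 1) :=
      dual_mul hn _ _
    rw [Dv_single, hv1, one_mul] at h1
    refine le_trans (by exact_mod_cast h1) ?_
    exact Finset.single_le_sum (f := fun j => f (Pi.single j (1:ℝ)))
      (fun j _ => f_nonneg hn _) (Finset.mem_univ i)
  exact Metric.isCompact_of_isClosed_isBounded hcl hbdd

theorem claimT {ε : ℝ} (hε : 0 < ε) (T : Finset (Fin N)) :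
    ∃ δ : ℝ, 0 < δ ∧ ∀ v : Fin N → ℝ, dualNormF f (Dv v) = 1 → (∀ i ∈ T, v i = 0) →
      ∃ w : Fin N → ℝ, dualNormF f (Dv w) = 1 ∧ (∀ i ∈ T, w i = 0) ∧
        ∀ x, f x = 1 → 1 - δ < Dv v x →
          ∃ y, f y = 1 ∧ Dv w y = 1 ∧ f (x - y) < ε := by
  by_contra hcon
  push_neg at hcon
  have hsel : ∀ n : ℕ, ∃ v : Fin N → ℝ, (dualNormF f (Dv v) = 1 ∧ ∀ i ∈ T, v i = 0) ∧
      ∀ w : Fin N → ℝ, dualNormF f (Dv w) = 1 → (∀ i ∈ T, w i = 0) →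
        ∃ x, f x = 1 ∧ 1 - 1/(n+1) < Dv v x ∧
          ∀ y, f y = 1 → Dv w y = 1 → ε ≤ f (x - y) := by
    intro n
    obtain ⟨v, hv1, hv2, hv3⟩ := hcon (1/(n+1)) (by positivity)
    exact ⟨v, ⟨hv1, hv2⟩, hv3⟩
  choose A hA1 hA2 using hsel
  obtain ⟨vv, hvv, φ₁, hφ₁, hAtend⟩ := (KT_compact hn T).tendsto_subseq
    (fun n => hA1 n)
  have hsel2 : ∀ n : ℕ, ∃ x, f x = 1 ∧ 1 - 1/(φ₁ n + 1) < Dv (A (φ₁ n)) x ∧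
      ∀ y, f y = 1 → Dv vv y = 1 → ε ≤ f (x - y) :=
    fun n => hA2 (φ₁ n) vv hvv.1 hvv.2
  choose x hx1 hx2 hx3 using hsel2
  obtain ⟨xx, hxx, φ₂, hφ₂, hxtend⟩ := (f_sphere_compact hn).tendsto_subseq
    (fun n => by exact hx1 n)
  have htend : Filter.Tendsto (fun n => Dv (A (φ₁ (φ₂ n))) (x (φ₂ n)))
      Filter.atTop (nhds (Dv vv xx)) := by
    refine Dv_tendsto ?_ hxtend
    exact hAtend.comp hφ₂.tendsto_atTop
  have hlow : Filter.Tendsto (fun n : ℕ => 1 - 1/((φ₁ (φ₂ n) : ℝ) + 1))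
      Filter.atTop (nhds 1) := by
    have h1 : Filter.Tendsto (fun k : ℕ => 1 - 1/((k:ℝ)+1)) Filter.atTop (nhds 1) := by
      have : Filter.Tendsto (fun n : ℕ => 1 / ((n : ℝ) + 1)) Filter.atTop (nhds 0) :=
        tendsto_one_div_add_atTop_nhds_zero_nat
      have h2 := Filter.Tendsto.const_sub (1:ℝ) this
      simpa using h2
    exact h1.comp ((hφ₁.comp hφ₂).tendsto_atTop)
  have hqq : Dv vv xx = 1 := by
    have hge : 1 ≤ Dv vv xx := by
      refine le_of_tendsto_of_tendsto' hlow htend fun n => ?_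
      exact (hx2 (φ₂ n)).le
    have hle : Dv vv xx ≤ 1 := by
      have h1 := dual_mul hn (Dv vv) xx
      have hfxx : f xx = 1 := hxx
      rw [hvv.1, one_mul, hfxx] at h1
      exact le_trans (le_abs_self _) h1
    linarith
  have hcontra : Filter.Tendsto (fun n => f (x (φ₂ n) - xx)) Filter.atTop (nhds 0) := by
    have h1 : Filter.Tendsto (fun n => x (φ₂ n) - xx) Filter.atTop (nhds 0) := by
      have := hxtend.sub (tendsto_const_nhds (x := xx))
      simpa using this
    have := (f_cont hn).continuousAt.tendsto.comp h1
    simpa [f_zero hn, Function.comp_def] using this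
  have hbnd : ∀ n, ε ≤ f (x (φ₂ n) - xx) := fun n =>
    hx3 (φ₂ n) xx hxx hqq
  have : ε ≤ 0 := le_of_tendsto_of_tendsto' tendsto_const_nhds hcontra hbnd
  linarith

end Claim


/-- The space `ℝ^N` endowed with any norm `f` has the approximate hyperplane property,
witnessed by the `1`-norming set consisting of the whole dual unit sphere: there is a
function `δ : (0,1) → (0,1)` such that for every `ε ∈ (0,1)` there is a map
`Υ : S_{(ℝ^N)*} → S_{(ℝ^N)*}` with: whenever `a ∈ S_{(ℝ^N)*}`, `x` is in the `f`-unit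
sphere and `a x > 1 - δ ε`, then `x` is at `f`-distance `< ε` from
`F (Υ a) = {y : f y = 1 ∧ (Υ a) y = 1}`; moreover `Υ` can be chosen so that
`(Υ a) (e i) = 0` whenever `a (e i) = 0`. -/
theorem stmt19 {N : ℕ} (f : (Fin N → ℝ) → ℝ) (hnorm : IsNormOn f) :
    (∀ x, f x = sSup {s : ℝ | ∃ a : (Fin N → ℝ) →ₗ[ℝ] ℝ, dualNormF f a = 1 ∧ s = |a x|}) ∧
    ∃ δ : ℝ → ℝ, (∀ ε : ℝ, 0 < ε → ε < 1 → 0 < δ ε ∧ δ ε < 1) ∧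
      ∀ ε : ℝ, 0 < ε → ε < 1 →
        ∃ Υ : ((Fin N → ℝ) →ₗ[ℝ] ℝ) → ((Fin N → ℝ) →ₗ[ℝ] ℝ),
          (∀ a, dualNormF f a = 1 → dualNormF f (Υ a) = 1) ∧
          (∀ a, dualNormF f a = 1 → ∀ x, f x = 1 → 1 - δ ε < a x →
            ∃ y, f y = 1 ∧ (Υ a) y = 1 ∧ f (x - y) < ε) ∧
          (∀ a, ∀ i, a (Pi.single i 1) = 0 → (Υ a) (Pi.single i 1) = 0) := by
  classical
  refine ⟨norming hnorm, ?_⟩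
  have key : ∀ ε : ℝ, 0 < ε → ε < 1 → ∃ d : ℝ, (0 < d ∧ d < 1) ∧
      ∃ Υ : ((Fin N → ℝ) →ₗ[ℝ] ℝ) → ((Fin N → ℝ) →ₗ[ℝ] ℝ),
        (∀ a, dualNormF f a = 1 → dualNormF f (Υ a) = 1) ∧
        (∀ a, dualNormF f a = 1 → ∀ x, f x = 1 → 1 - d < a x →
          ∃ y, f y = 1 ∧ (Υ a) y = 1 ∧ f (x - y) < ε) ∧
        (∀ a, ∀ i, a (Pi.single i 1) = 0 → (Υ a) (Pi.single i 1) = 0) := by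
    intro ε hε hε1
    choose δT hδT hclaim using fun T : Finset (Fin N) => claimT hnorm hε T
    set δ0 := Finset.univ.inf' Finset.univ_nonempty δT with hδ0
    set d := min (1/2 : ℝ) δ0 with hd
    have hdpos : 0 < d := by
      refine lt_min (by norm_num) ?_
      rw [hδ0, Finset.lt_inf'_iff]
      exact fun T _ => hδT T
    have hsel : ∀ a : (Fin N → ℝ) →ₗ[ℝ] ℝ, dualNormF f a = 1 →
        ∃ w : Fin N → ℝ, dualNormF f (Dv w) = 1 ∧
          (∀ i, a (Pi.single i 1) = 0 → w i = 0) ∧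
          ∀ x, f x = 1 → 1 - d < a x → ∃ y, f y = 1 ∧ Dv w y = 1 ∧ f (x - y) < ε := by
      intro a ha
      set v : Fin N → ℝ := fun i => a (Pi.single i 1) with hv
      set T : Finset (Fin N) := Finset.univ.filter (fun i => v i = 0) with hT
      have hvd : dualNormF f (Dv v) = 1 := by rw [hv, Dv_eq]; exact ha
      have hvz : ∀ i ∈ T, v i = 0 := fun i hi => (Finset.mem_filter.mp hi).2
      obtain ⟨w, hw1, hw2, hw3⟩ := hclaim T v hvd hvz
      refine ⟨w, hw1, ?_, ?_⟩
      · intro i hi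
        exact hw2 i (Finset.mem_filter.mpr ⟨Finset.mem_univ i, hi⟩)
      · intro x hx hax
        refine hw3 x hx ?_
        have h2 : Dv v x = a x := by rw [hv, Dv_eq]
        have h3 : d ≤ δT T := le_trans (min_le_right _ _)
          (Finset.inf'_le _ (Finset.mem_univ T))
        rw [h2]
        linarith
    choose W hW1 hW2 hW3 using hsel
    refine ⟨d, ⟨hdpos, lt_of_le_of_lt (min_le_left _ _) (by norm_num)⟩, ?_⟩
    refine ⟨fun a => if h : dualNormF f a = 1 then Dv (W a h) else 0, ?_, ?_, ?_⟩
    · intro a ha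
      simp only [dif_pos ha]
      exact hW1 a ha
    · intro a ha x hx hax
      simp only [dif_pos ha]
      exact hW3 a ha x hx hax
    · intro a i hai
      by_cases h : dualNormF f a = 1
      · simp only [dif_pos h]
        rw [Dv_single]
        exact hW2 a h i hai
      · simp only [dif_neg h]
        simp
  refine ⟨fun ε => if h : 0 < ε ∧ ε < 1 then Classical.choose (key ε h.1 h.2) else 1/2, ?_, ?_⟩
  · intro ε h1 h2
    simp only [dif_pos (⟨h1, h2⟩ : 0 < ε ∧ ε < 1)]
    exact (Classical.choose_spec (key ε h1 h2)).1
  · intro ε h1 h2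
    simp only [dif_pos (⟨h1, h2⟩ : 0 < ε ∧ ε < 1)]
    exact (Classical.choose_spec (key ε h1 h2)).2
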